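/- arXiv:1910.11728 — 2 statements merged into one kernel-verified Lean document; each statement's English description precedes it below -/
import Mathlib

section
/- Poincaré's theorem: a minimal orientation-preserving homeomorphism f of the circle is topologically conjugate to the rigid rotation ρ_α : e^{2πix} ↦ e^{2πi(x+α)}, where α is the rotation number of f (which is irrational). -/
open Filter

/-- The universal covering map `π : ℝ → S¹`, `π x = e^{2πix}`. -/
noncomputable def coverMap : ℝ → Circle := fun x => Circle.exp (2 * Real.pi * x)

open Function Topology

lemma coverMap_eq_iff {x y : ℝ} : coverMap x = coverMap y ↔ ∃ m : ℤ, x = y + m := by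
  unfold coverMap
  rw [Circle.exp_eq_exp]
  constructor
  · rintro ⟨m, hm⟩
    refine ⟨m, mul_left_cancel₀ (a := 2 * Real.pi) (by positivity) ?_⟩
    rw [hm]; ring
  · rintro ⟨m, rfl⟩
    exact ⟨m, by ring⟩

lemma coverMap_continuous : Continuous coverMap :=
  Circle.exp.continuous.comp (continuous_const.mul continuous_id)

lemma coverMap_surjective : Function.Surjective coverMap := by
  intro z
  refine ⟨Complex.arg z / (2 * Real.pi), ?_⟩
  unfold coverMap
  rw [mul_div_cancel₀ _ (by positivity : (2:ℝ) * Real.pi ≠ 0)]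
  exact Circle.exp_arg z

lemma lift_iter (g : Circle → Circle) (G : ℝ → ℝ)
    (h : ∀ x, coverMap (G x) = g (coverMap x)) (n : ℕ) (x : ℝ) :
    coverMap (G^[n] x) = g^[n] (coverMap x) := by
  induction n with
  | zero => simp
  | succ n ih =>
      rw [Function.iterate_succ_apply', Function.iterate_succ_apply', ih.symm, h]

instance : Infinite Circle := by
  refine Infinite.of_injective (fun n : ℕ => coverMap (1 / ((n : ℝ) + 2))) ?_
  intro a b hab
  obtain ⟨m, hm⟩ := coverMap_eq_iff.mp hab
  have ha2 : (0:ℝ) < (a:ℝ) + 2 := by positivity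
  have hb2 : (0:ℝ) < (b:ℝ) + 2 := by positivity
  have ha1 : 0 < 1 / ((a:ℝ) + 2) := by positivity
  have hb1 : 0 < 1 / ((b:ℝ) + 2) := by positivity
  have ha1' : 1 / ((a:ℝ) + 2) ≤ 1 := by
    rw [div_le_one ha2]; linarith
  have hb1' : 1 / ((b:ℝ) + 2) ≤ 1 := by
    rw [div_le_one hb2]; linarith
  have hm0 : m = 0 := by
    have h1 : (m : ℝ) < 1 := by linarith
    have h2 : (-1 : ℝ) < m := by linarith
    have h1' : m < 1 := by exact_mod_cast h1
    have h2' : (-1 : ℤ) < m := by exact_mod_cast h2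
    omega
  rw [hm0] at hm
  push_cast at hm
  field_simp at hm
  exact_mod_cast (by linear_combination -hm : (a:ℝ) = b)


/-- Descend a ℤ-equivariant map on `ℝ` to `AddCircle 1`. -/
noncomputable def descend (G : ℝ → ℝ) (hG : ∀ (x : ℝ) (m : ℤ), G (x + m) = G x + m) :
    AddCircle (1:ℝ) → AddCircle (1:ℝ) :=
  fun y => Quotient.liftOn' y (fun x => ((G x : ℝ) : AddCircle (1:ℝ)))
    (by
      intro a b hab
      have hab' := QuotientAddGroup.leftRel_apply.mp hab
      obtain ⟨k, hk⟩ := AddSubgroup.mem_zmultiples_iff.mp hab'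
      have hb : b = a + k := by
        rw [zsmul_eq_mul, mul_one] at hk
        linarith [hk]
      simp only [hb, hG a k]
      rw [QuotientAddGroup.eq]
      refine AddSubgroup.mem_zmultiples_iff.mpr ⟨k, ?_⟩
      rw [zsmul_eq_mul, mul_one]
      push_cast
      ring)

lemma descend_coe (G : ℝ → ℝ) (hG : ∀ (x : ℝ) (m : ℤ), G (x + m) = G x + m) (x : ℝ) :
    descend G hG (x : AddCircle (1:ℝ)) = ((G x : ℝ) : AddCircle (1:ℝ)) := rfl

lemma descend_continuous (G : ℝ → ℝ) (hG : ∀ (x : ℝ) (m : ℤ), G (x + m) = G x + m)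
    (hc : Continuous G) : Continuous (descend G hG) := by
  have mkQ : IsQuotientMap ((↑) : ℝ → AddCircle (1:ℝ)) := isQuotientMap_quotient_mk'
  rw [mkQ.continuous_iff]
  exact continuous_quotient_mk'.comp hc


/-- Poincaré's classification theorem: a minimal orientation-preserving circle
homeomorphism `f` has irrational rotation number `τ` and is topologically conjugate to
the rigid rotation by `e^{2πiτ}`. -/
theorem poincare_classification (f : Circle ≃ₜ Circle)
    (hmin : ∀ z : Circle,
      Dense {w : Circle | ∃ n : ℕ, w = (⇑f)^[n] z ∨ w = (⇑f.symm)^[n] z})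
    (F : ℝ ≃ₜ ℝ) (hFm : StrictMono F)
    (hFlift : ∀ x : ℝ, coverMap (F x) = f (coverMap x))
    (τ : ℝ) (hτ : Tendsto (fun n : ℕ => ((⇑F)^[n] 0) / (n : ℝ)) atTop (nhds τ)) :
    Irrational τ ∧
      ∃ h : Circle ≃ₜ Circle, ∀ z : Circle,
        h (f z) = Circle.exp (2 * Real.pi * τ) * h z := by
  -- Step 1: F is a degree one lift
  have hF1 : ∀ x : ℝ, F (x + 1) = F x + 1 := by
    have hint : ∀ x : ℝ, ∃ m : ℤ, F (x + 1) = F x + m := by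
      intro x
      apply coverMap_eq_iff.mp
      rw [hFlift, hFlift]
      congr 1
      exact coverMap_eq_iff.mpr ⟨1, by norm_num⟩
    obtain ⟨n₀, hn₀⟩ := hint 0
    have hconst : ∀ x : ℝ, F (x + 1) = F x + n₀ := by
      intro x
      by_contra hne
      obtain ⟨m, hm⟩ := hint x
      have hmn : m ≠ n₀ := by rintro rfl; exact hne hm
      set g : ℝ → ℝ := fun y => F (y + 1) - F y with hg
      have hgc : Continuous g := by
        exact (F.continuous.comp (continuous_id.add continuous_const)).sub F.continuous
      have hgx : g x = m := by simp [hg, hm]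
      have hn₀' : F 1 = F 0 + n₀ := by rw [← hn₀]; norm_num
      have hg0 : g 0 = n₀ := by simp [hg, hn₀']
      set μ : ℤ := min m n₀ with hμ
      set t : ℝ := (μ : ℝ) + 1/2 with ht
      have htm : t ∈ Set.uIcc (g x) (g 0) := by
        rw [hgx, hg0, Set.mem_uIcc]
        rcases le_total m n₀ with h | h
        · left
          have hμm : μ = m := min_eq_left h
          have hmn' : m + 1 ≤ n₀ := by omega
          constructor
          · rw [ht, hμm]; linarith
          · rw [ht, hμm]
            have : ((m:ℝ)) + 1 ≤ (n₀:ℝ) := by exact_mod_cast hmn'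
            linarith
        · right
          have hμm : μ = n₀ := min_eq_right h
          have hmn' : n₀ + 1 ≤ m := by omega
          constructor
          · rw [ht, hμm]; linarith
          · rw [ht, hμm]
            have : ((n₀:ℝ)) + 1 ≤ (m:ℝ) := by exact_mod_cast hmn'
            linarith
      obtain ⟨y, _, hy⟩ := intermediate_value_uIcc (f := g) (hgc.continuousOn) htm
      obtain ⟨k, hk⟩ := hint y
      have : (k : ℝ) = t := by
        have : g y = k := by simp [hg, hk]
        rw [← this, hy]
      rw [ht] at this
      have h2 : ((k - μ : ℤ) : ℝ) = 1/2 := by push_cast; linarith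
      rcases le_or_gt (k - μ) 0 with h | h
      · have : ((k - μ : ℤ) : ℝ) ≤ 0 := by exact_mod_cast h
        linarith
      · have : (1 : ℝ) ≤ ((k - μ : ℤ) : ℝ) := by exact_mod_cast h
        linarith
    -- n₀ = 1
    have hpos : 0 < n₀ := by
      have := hFm (lt_add_one (0:ℝ))
      rw [hn₀] at this
      have : (0:ℝ) < n₀ := by linarith
      exact_mod_cast this
    have hn1 : n₀ = 1 := by
      by_contra hne
      have h2 : 2 ≤ n₀ := by omega
      have h2' : F 0 + 1 ∈ Set.Icc (F 0) (F 1) := by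
        constructor
        · linarith
        · rw [show (1:ℝ) = 0 + 1 by ring, hconst]
          have : (2:ℝ) ≤ n₀ := by exact_mod_cast h2
          linarith
      obtain ⟨x', hx'mem, hx'⟩ := intermediate_value_Icc (le_of_lt zero_lt_one)
        (F.continuous.continuousOn) h2'
      have hc : coverMap (F x') = coverMap (F 0) := by
        rw [hx']
        exact coverMap_eq_iff.mpr ⟨1, by norm_num⟩
      rw [hFlift, hFlift] at hc
      have hc2 : coverMap x' = coverMap 0 := f.injective hc
      obtain ⟨m, hm⟩ := coverMap_eq_iff.mp hc2
      rw [zero_add] at hm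
      have hx'0 : x' = 0 ∨ x' = 1 := by
        obtain ⟨h0, h1⟩ := hx'mem
        rw [hm] at h0 h1 ⊢
        have h0' : (0:ℤ) ≤ m := by exact_mod_cast h0
        have h1' : (m:ℤ) ≤ 1 := by exact_mod_cast h1
        interval_cases m
        · left; norm_num
        · right; norm_num
      rcases hx'0 with rfl | rfl
      · linarith [hx']
      · rw [show (1:ℝ) = 0 + 1 by ring, hconst] at hx'
        have : (n₀ : ℝ) = 1 := by linarith
        have : n₀ = 1 := by exact_mod_cast this
        omega
    intro x
    rw [hconst x, hn1]
    norm_num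
  -- Step 2: irrationality
  have hirr : Irrational τ := by
    set Ff : CircleDeg1Lift := ⟨⟨⇑F, hFm.monotone⟩, hF1⟩ with hFf
    have hτF : CircleDeg1Lift.translationNumber Ff = τ :=
      Ff.translationNumber_eq_of_tendsto₀ hτ
    rw [Irrational]
    rintro ⟨q, hq⟩
    have hden : 0 < q.den := q.pos
    have hrat : CircleDeg1Lift.translationNumber Ff = (q.num : ℝ) / (q.den : ℝ) := by
      rw [hτF, ← hq, Rat.cast_def]
    rw [Ff.translationNumber_eq_rat_iff F.continuous hden] at hrat
    obtain ⟨x, hx⟩ := hrat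
    rw [CircleDeg1Lift.coe_pow] at hx
    -- z is periodic for f
    set z : Circle := coverMap x with hz
    have hzper : (⇑f)^[q.den] z = z := by
      rw [hz, ← lift_iter (⇑f) (⇑F) hFlift q.den x]
      show coverMap ((⇑Ff)^[q.den] x) = coverMap x
      rw [hx]
      exact coverMap_eq_iff.mpr ⟨q.num, by push_cast; ring⟩
    -- orbit is contained in a finite set
    set S : Set Circle := (fun k : ℕ => (⇑f)^[k] z) '' (Set.Iio q.den) with hS
    have hSfin : S.Finite := (Set.finite_Iio q.den).image _
    have hmul : ∀ k : ℕ, (⇑f)^[k * q.den] z = z := by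
      intro k
      induction k with
      | zero => simp
      | succ k ih => rw [Nat.succ_mul, Function.iterate_add_apply, hzper, ih]
    have hmem : ∀ k : ℕ, (⇑f)^[k] z ∈ S := by
      intro k
      have h1 : (⇑f)^[k] z = (⇑f)^[k % q.den] z := by
        conv_lhs => rw [← Nat.mod_add_div k q.den, Function.iterate_add_apply]
        congr 1
        rw [mul_comm]
        exact hmul _
      rw [h1]
      exact ⟨k % q.den, Nat.mod_lt _ hden, rfl⟩
    have horb : {w : Circle | ∃ n : ℕ, w = (⇑f)^[n] z ∨ w = (⇑f.symm)^[n] z} ⊆ S := by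
      rintro w ⟨n, rfl | rfl⟩
      · exact hmem n
      · obtain ⟨d, hd⟩ : ∃ d, q.den = d + 1 := ⟨q.den - 1, (Nat.succ_pred_eq_of_pos hden).symm⟩
        have key : (⇑f.symm)^[n] z = (⇑f)^[n * d] z := by
          have h1 : (⇑f)^[n] ((⇑f)^[n * d] z) = z := by
            rw [← Function.iterate_add_apply]
            have : n + n * d = n * q.den := by rw [hd]; ring
            rw [this, hmul]
          have hli : Function.LeftInverse (⇑f.symm) (⇑f) := f.symm_apply_apply
          calc (⇑f.symm)^[n] z = (⇑f.symm)^[n] ((⇑f)^[n] ((⇑f)^[n * d] z)) := by rw [h1]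
            _ = (⇑f)^[n * d] z := hli.iterate n _
        rw [key]
        exact hmem _
    have hdense := hmin z
    have hSclosed : IsClosed S := hSfin.isClosed
    have huniv : (Set.univ : Set Circle) ⊆ S := by
      have h1 : closure {w : Circle | ∃ n : ℕ, w = (⇑f)^[n] z ∨ w = (⇑f.symm)^[n] z}
          = Set.univ := hdense.closure_eq
      calc (Set.univ : Set Circle) = _ := h1.symm
        _ ⊆ closure S := closure_mono horb
        _ = S := hSclosed.closure_eq
    exact Set.infinite_univ (hSfin.subset huniv)
  refine ⟨hirr, ?_⟩
  -- Step 3: semiconjugacy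
  obtain ⟨H, hHsc, hHcont, hHsurj⟩ :
      ∃ H : CircleDeg1Lift, (∀ x, H (F x) = H x + τ) ∧ Continuous ⇑H ∧
        Function.Surjective ⇑H := by
    set Ff : CircleDeg1Lift := ⟨⟨⇑F, hFm.monotone⟩, hF1⟩ with hFf
    have hτF : CircleDeg1Lift.translationNumber Ff = τ :=
      Ff.translationNumber_eq_of_tendsto₀ hτ
    have hFs1 : ∀ x : ℝ, F.symm (x + 1) = F.symm x + 1 := by
      intro x
      apply hFm.injective
      rw [F.apply_symm_apply, hF1, F.apply_symm_apply]
    have hFsm : Monotone ⇑F.symm := fun a b hab =>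
      hFm.le_iff_le.mp (by simpa [F.apply_symm_apply] using hab)
    set Fs : CircleDeg1Lift := ⟨⟨⇑F.symm, hFsm⟩, hFs1⟩ with hFs
    set u : CircleDeg1Liftˣ :=
      { val := Ff, inv := Fs,
        val_inv := CircleDeg1Lift.ext fun x => F.apply_symm_apply x,
        inv_val := CircleDeg1Lift.ext fun x => F.symm_apply_apply x } with hu
    obtain ⟨H, hH⟩ := CircleDeg1Lift.units_semiconj_of_translationNumber_eq
      (f₁ := u) (f₂ := CircleDeg1Lift.translate (Multiplicative.ofAdd τ))
      (by rw [CircleDeg1Lift.translationNumber_translate]; exact hτF)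
    have hHsc : ∀ x : ℝ, H (F x) = H x + τ := by
      intro x
      have := hH x
      rw [CircleDeg1Lift.translate_apply] at this
      rw [show (⇑(u : CircleDeg1Lift) : ℝ → ℝ) = ⇑F from rfl] at this
      rw [this, add_comm]
    -- dense range
    have hHsc' : ∀ x : ℝ, H (F.symm x) = H x - τ := by
      intro x
      have := hHsc (F.symm x)
      rw [F.apply_symm_apply] at this
      linarith
    have hup : ∀ (k : ℕ) (x : ℝ), H ((⇑F)^[k] x) = H x + k * τ := by
      intro k
      induction k with
      | zero => simp
      | succ k ih =>
          intro x
          rw [Function.iterate_succ_apply', hHsc, ih]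
          push_cast; ring
    have hdn : ∀ (k : ℕ) (x : ℝ), H ((⇑F.symm)^[k] x) = H x - k * τ := by
      intro k
      induction k with
      | zero => simp
      | succ k ih =>
          intro x
          rw [Function.iterate_succ_apply', hHsc', ih]
          push_cast; ring
    have hrange : DenseRange ⇑H := by
      set S : AddSubgroup ℝ := AddSubgroup.closure ({1, τ} : Set ℝ) with hSdef
      have hdense : Dense (S : Set ℝ) := by
        rcases S.dense_or_cyclic with h | ⟨a, ha⟩
        · exact h
        · exfalso
          have h1 : (1:ℝ) ∈ S := AddSubgroup.subset_closure (by simp)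
          have hτS : τ ∈ S := AddSubgroup.subset_closure (by simp)
          rw [ha, AddSubgroup.mem_closure_singleton] at h1 hτS
          obtain ⟨n, hn⟩ := h1
          obtain ⟨m, hm⟩ := hτS
          have hn0 : n ≠ 0 := by
            rintro rfl
            simp at hn
          refine hirr ⟨(m : ℚ)/(n : ℚ), ?_⟩
          have hnr : (n : ℝ) ≠ 0 := Int.cast_ne_zero.mpr hn0
          have ha0 : a = 1 / (n : ℝ) := by
            rw [zsmul_eq_mul] at hn
            field_simp
            linarith
          rw [← hm, zsmul_eq_mul, ha0]
          push_cast
          field_simp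
      have hsub : ∀ s ∈ S, H 0 + s ∈ Set.range ⇑H := by
        intro s hs
        rw [hSdef, AddSubgroup.mem_closure_pair] at hs
        obtain ⟨m, n, hmn⟩ := hs
        rw [zsmul_eq_mul, mul_one, zsmul_eq_mul] at hmn
        obtain ⟨k, rfl | rfl⟩ := Int.eq_nat_or_neg n
        · refine ⟨(⇑F)^[k] 0 + m, ?_⟩
          rw [CircleDeg1Lift.map_add_int, hup]
          push_cast at hmn ⊢
          linarith
        · refine ⟨(⇑F.symm)^[k] 0 + m, ?_⟩
          rw [CircleDeg1Lift.map_add_int, hdn]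
          push_cast at hmn ⊢
          linarith
      refine dense_of_exists_between fun a b hab => ?_
      obtain ⟨s, hsS, hs⟩ := hdense.exists_between (show a - H 0 < b - H 0 by linarith)
      exact ⟨H 0 + s, hsub s hsS, by constructor <;> [linarith [hs.1]; linarith [hs.2]]⟩
    have hHcont : Continuous ⇑H := H.monotone.continuous_of_denseRange hrange
    have hHsurj : Function.Surjective ⇑H := by
      refine hHcont.surjective ?_ ?_
      · apply tendsto_atTop_mono (f := fun x : ℝ => H 0 + (x - 1))
        · intro x
          have h1 : H ((0:ℝ) + (⌊x⌋:ℤ)) = H 0 + (⌊x⌋:ℤ) := CircleDeg1Lift.map_add_int _ _ _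
          have h2 : H ((0:ℝ) + (⌊x⌋:ℤ)) ≤ H x := H.monotone (by push_cast; linarith [Int.floor_le x])
          have h3 : x - 1 ≤ (⌊x⌋:ℝ) := by linarith [Int.sub_one_lt_floor x]
          show H 0 + (x - 1) ≤ H x
          linarith
        · exact tendsto_atTop_add_const_left _ _
            (tendsto_atTop_add_const_right _ _ tendsto_id)
      · apply tendsto_atBot_mono (f := fun x : ℝ => H 0 + (x + 1))
        · intro x
          have h1 : H ((0:ℝ) + (⌈x⌉:ℤ)) = H 0 + (⌈x⌉:ℤ) := CircleDeg1Lift.map_add_int _ _ _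
          have h2 : H x ≤ H ((0:ℝ) + (⌈x⌉:ℤ)) := H.monotone (by push_cast; linarith [Int.le_ceil x])
          have h3 : (⌈x⌉:ℝ) ≤ x + 1 := by linarith [Int.ceil_lt_add_one x]
          show H x ≤ H 0 + (x + 1)
          linarith
        · exact tendsto_atBot_add_const_left _ _
            (tendsto_atBot_add_const_right _ _ tendsto_id)
    exact ⟨H, hHsc, hHcont, hHsurj⟩
  have hHsc' : ∀ x : ℝ, H (F.symm x) = H x - τ := by
    intro x
    have := hHsc (F.symm x)
    rw [F.apply_symm_apply] at this
    linarith
  -- Step 4: injectivity from minimality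
  have hHinj : Function.Injective ⇑H := by
    have hFslift : ∀ x : ℝ, coverMap (F.symm x) = f.symm (coverMap x) := by
      intro x
      have := hFlift (F.symm x)
      rw [F.apply_symm_apply] at this
      rw [this, f.symm_apply_apply]
    have hFsmono : StrictMono ⇑F.symm := by
      intro a b hab
      rw [← F.apply_symm_apply a, ← F.apply_symm_apply b] at hab
      exact (hFm.lt_iff_lt).mp hab
    set Flat : Set ℝ := {x | ∃ a b : ℝ, a < x ∧ x < b ∧ H a = H b} with hFlatDef
    have hFlatOpen : IsOpen Flat := by
      rw [isOpen_iff_forall_mem_open]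
      rintro x ⟨a, b, hax, hxb, hab⟩
      exact ⟨Set.Ioo a b, fun y hy => ⟨a, b, hy.1, hy.2, hab⟩, isOpen_Ioo, hax, hxb⟩
    have hFlatF : ∀ x, x ∈ Flat → F x ∈ Flat := by
      rintro x ⟨a, b, hax, hxb, hab⟩
      exact ⟨F a, F b, hFm hax, hFm hxb, by rw [hHsc, hHsc, hab]⟩
    have hFlatFs : ∀ x, x ∈ Flat → F.symm x ∈ Flat := by
      rintro x ⟨a, b, hax, hxb, hab⟩
      exact ⟨F.symm a, F.symm b, hFsmono hax, hFsmono hxb, by rw [hHsc', hHsc', hab]⟩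
    have hFlatT : ∀ x, x ∈ Flat → ∀ m : ℤ, x + m ∈ Flat := by
      rintro x ⟨a, b, hax, hxb, hab⟩ m
      refine ⟨a + m, b + m, by linarith, by linarith, ?_⟩
      rw [CircleDeg1Lift.map_add_int, CircleDeg1Lift.map_add_int, hab]
    intro p q hpq
    by_contra hne
    -- produce a flat point
    have hw : ∃ w, w ∈ Flat := by
      rcases lt_or_gt_of_ne hne with h | h
      · exact ⟨(p + q)/2, p, q, by linarith, by linarith, hpq⟩
      · exact ⟨(p + q)/2, q, p, by linarith, by linarith, hpq.symm⟩
    obtain ⟨w, hwF⟩ := hw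
    -- complement is nonempty
    have hCne : ∃ x₀, x₀ ∈ Flatᶜ := by
      by_contra hc
      push_neg at hc
      simp only [Set.mem_compl_iff, not_not] at hc
      -- H is locally constant hence constant; contradiction with H(1) = H 0 + 1
      set E : Set ℝ := {x | H x = H 0} with hE
      have hEopen : IsOpen E := by
        rw [isOpen_iff_forall_mem_open]
        intro x hx
        obtain ⟨a, b, hax, hxb, hab⟩ := hc x
        refine ⟨Set.Ioo a b, ?_, isOpen_Ioo, hax, hxb⟩
        intro y hy
        have h1 : H a ≤ H y := H.monotone hy.1.le
        have h2 : H y ≤ H b := H.monotone hy.2.le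
        have h3 : H a ≤ H x := H.monotone hax.le
        have h4 : H x ≤ H b := H.monotone hxb.le
        have : H y = H x := by rw [← hab] at h2 h4; linarith
        rw [Set.mem_setOf_eq, this]
        exact hx
      have hEclosed : IsClosed E := isClosed_eq hHcont continuous_const
      have hEuniv : E = Set.univ :=
        (isClopen_iff.mp ⟨hEclosed, hEopen⟩).resolve_left
          (Set.nonempty_iff_ne_empty.mp ⟨0, rfl⟩)
      have h1 : H 1 = H 0 := by
        have : (1:ℝ) ∈ E := hEuniv ▸ Set.mem_univ _
        exact this
      have h2 : H 1 = H 0 + 1 := by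
        have := H.map_add_one 0
        simpa using this
      linarith
    obtain ⟨x₀, hx₀⟩ := hCne
    -- the closed invariant set K
    set K : Set Circle := coverMap '' (Flatᶜ ∩ Set.Icc 0 1) with hK
    have hKcl : IsClosed K := by
      have : IsCompact (Flatᶜ ∩ Set.Icc (0:ℝ) 1) :=
        (isCompact_Icc.inter_left hFlatOpen.isClosed_compl)
      exact (this.image coverMap_continuous).isClosed
    have hCK : ∀ y : ℝ, y ∈ Flatᶜ → coverMap y ∈ K := by
      intro y hy
      refine ⟨y - ⌊y⌋, ⟨?_, ?_⟩, ?_⟩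
      · intro hmem
        apply hy
        have := hFlatT _ hmem ⌊y⌋
        simpa using this
      · constructor
        · linarith [Int.floor_le y]
        · linarith [Int.lt_floor_add_one y]
      · exact coverMap_eq_iff.mpr ⟨-⌊y⌋, by push_cast; ring⟩
    have hCinvF : ∀ (n : ℕ) (x : ℝ), x ∉ Flat → (⇑F)^[n] x ∉ Flat := by
      intro n
      induction n with
      | zero => intro x hx; simpa using hx
      | succ n ih =>
          intro x hx hmem
          rw [Function.iterate_succ_apply'] at hmem
          have h2 := hFlatFs _ hmem
          rw [F.symm_apply_apply] at h2
          exact ih x hx h2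
    have hCinvFs : ∀ (n : ℕ) (x : ℝ), x ∉ Flat → (⇑F.symm)^[n] x ∉ Flat := by
      intro n
      induction n with
      | zero => intro x hx; simpa using hx
      | succ n ih =>
          intro x hx hmem
          rw [Function.iterate_succ_apply'] at hmem
          have h2 := hFlatF _ hmem
          rw [F.apply_symm_apply] at h2
          exact ih x hx h2
    set z : Circle := coverMap x₀ with hz
    have horbK : {w : Circle | ∃ n : ℕ, w = (⇑f)^[n] z ∨ w = (⇑f.symm)^[n] z} ⊆ K := by
      rintro _ ⟨n, rfl | rfl⟩
      · rw [hz, ← lift_iter (⇑f) (⇑F) hFlift n x₀]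
        exact hCK _ (hCinvF n x₀ hx₀)
      · rw [hz, ← lift_iter (⇑f.symm) (⇑F.symm) hFslift n x₀]
        exact hCK _ (hCinvFs n x₀ hx₀)
    have hKuniv : (Set.univ : Set Circle) ⊆ K := by
      have h1 : closure {w : Circle | ∃ n : ℕ, w = (⇑f)^[n] z ∨ w = (⇑f.symm)^[n] z}
          = Set.univ := (hmin z).closure_eq
      calc (Set.univ : Set Circle) = _ := h1.symm
        _ ⊆ closure K := closure_mono horbK
        _ = K := hKcl.closure_eq
    obtain ⟨c, ⟨hcC, _⟩, hcw⟩ := hKuniv (Set.mem_univ (coverMap w))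
    obtain ⟨m, hm⟩ := coverMap_eq_iff.mp hcw
    exact hcC (hm ▸ hFlatT w hwF m)
  -- Step 5: build the conjugating homeomorphism
  have hsm : StrictMono ⇑H := H.monotone.strictMono_of_injective hHinj
  set HOrd : ℝ ≃o ℝ := StrictMono.orderIsoOfSurjective ⇑H hsm hHsurj with hHOrd
  have hHOc : ⇑HOrd = ⇑H := StrictMono.coe_orderIsoOfSurjective ⇑H hsm hHsurj
  set Hinv : ℝ → ℝ := ⇑HOrd.symm with hHinv
  have hHiL : ∀ x, Hinv (H x) = x := by
    intro x
    rw [hHinv, ← hHOc]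
    exact HOrd.symm_apply_apply x
  have hHiR : ∀ y, H (Hinv y) = y := by
    intro y
    rw [← hHOc, hHinv]
    exact HOrd.apply_symm_apply y
  have hGint : ∀ (x : ℝ) (m : ℤ), H (x + m) = H x + m := fun x m =>
    CircleDeg1Lift.map_add_int H x m
  have hGiint : ∀ (y : ℝ) (m : ℤ), Hinv (y + m) = Hinv y + m := by
    intro y m
    apply hHinj
    rw [hHiR, hGint, hHiR]
  have hHinvCont : Continuous Hinv := by
    have : Continuous ⇑(HOrd.toHomeomorph).symm := (HOrd.toHomeomorph).symm.continuous
    exact this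
  -- homeomorphism of AddCircle 1
  set gH := descend ⇑H hGint with hgH
  set gHi := descend Hinv hGiint with hgHi
  have hAleft : ∀ y : AddCircle (1:ℝ), gHi (gH y) = y := by
    intro y
    induction y using Quotient.inductionOn' with
    | h x =>
        show gHi (gH ((x : ℝ) : AddCircle (1:ℝ))) = _
        rw [hgH, hgHi, descend_coe, descend_coe, hHiL]
  have hAright : ∀ y : AddCircle (1:ℝ), gH (gHi y) = y := by
    intro y
    induction y using Quotient.inductionOn' with
    | h x =>
        show gH (gHi ((x : ℝ) : AddCircle (1:ℝ))) = _
        rw [hgH, hgHi, descend_coe, descend_coe, hHiR]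
  set hA : AddCircle (1:ℝ) ≃ₜ AddCircle (1:ℝ) :=
    { toFun := gH, invFun := gHi, left_inv := hAleft, right_inv := hAright,
      continuous_toFun := descend_continuous _ hGint hHcont,
      continuous_invFun := descend_continuous _ hGiint hHinvCont } with hhA
  set e : AddCircle (1:ℝ) ≃ₜ Circle := AddCircle.homeomorphCircle one_ne_zero with he
  have heCoe : ∀ x : ℝ, e ((x : ℝ) : AddCircle (1:ℝ)) = coverMap x := by
    intro x
    rw [he, AddCircle.homeomorphCircle_apply, AddCircle.toCircle_apply_mk]
    norm_num [coverMap]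
  set h : Circle ≃ₜ Circle := (e.symm.trans hA).trans e with hh
  have hhe : ∀ x : ℝ, h (coverMap x) = coverMap (H x) := by
    intro x
    rw [hh]
    have h1 : e.symm (coverMap x) = ((x : ℝ) : AddCircle (1:ℝ)) := by
      rw [← heCoe x, Homeomorph.symm_apply_apply]
    simp only [Homeomorph.trans_apply]
    rw [h1]
    show e (gH ((x : ℝ) : AddCircle (1:ℝ))) = _
    rw [hgH, descend_coe, heCoe]
  refine ⟨h, fun z => ?_⟩
  obtain ⟨x, rfl⟩ := coverMap_surjective z
  rw [← hFlift, hhe, hhe, hHsc]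
  show Circle.exp _ = _ * Circle.exp _
  rw [← Circle.exp_add]
  congr 1
  ring
end

section
/- Dichotomy theorem (Shi–Zhou): for a countable group G, either G admits a topologically transitive action on ℝ by orientation-preserving homeomorphisms, or every action of G on ℝ by orientation-preserving homeomorphisms has a wandering interval. -/
open Set Classical

namespace ShiZhou

variable {G : Type} [Group G] [Countable G]

/-- the orbit of a point -/
def orbit (φ : G →* Equiv.Perm ℝ) (y : ℝ) : Set ℝ := {z | ∃ g : G, z = φ g y}

lemma orbit_self (φ : G →* Equiv.Perm ℝ) (y : ℝ) : y ∈ orbit φ y :=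
  ⟨1, by simp⟩

lemma orbit_apply_mem (φ : G →* Equiv.Perm ℝ) {y z : ℝ} (g : G) (hz : z ∈ orbit φ y) :
    φ g z ∈ orbit φ y := by
  obtain ⟨k, rfl⟩ := hz
  exact ⟨g * k, by simp [map_mul]⟩

lemma orbit_no_max (φ : G →* Equiv.Perm ℝ) (SM : ∀ g : G, StrictMono (φ g)) {y : ℝ}
    (hnt : ∃ g : G, φ g y ≠ y) {u : ℝ} (hu : u ∈ orbit φ y) :
    ∃ w ∈ orbit φ y, u < w := by
  by_contra h
  push_neg at h
  have hfix : ∀ g : G, φ g u = u := by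
    intro g
    have h1 : φ g u ≤ u := h _ (orbit_apply_mem φ g hu)
    have h2 : φ g⁻¹ u ≤ u := h _ (orbit_apply_mem φ g⁻¹ hu)
    have h3 : u ≤ φ g u := by
      have := (SM g).monotone h2
      rwa [show φ g (φ g⁻¹ u) = u by rw [map_inv]; exact (φ g).apply_symm_apply u] at this
    exact le_antisymm h1 h3
  obtain ⟨g0, hg0⟩ := hnt
  obtain ⟨k, hk⟩ := hu
  have hy : y = φ k⁻¹ u := by rw [hk, map_inv]; exact ((φ k).symm_apply_apply y).symm
  have h1 : φ g0 y = φ (g0 * k⁻¹) u := by rw [hy, map_mul]; simp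
  rw [h1, hfix (g0 * k⁻¹)] at hg0
  have : y = u := by rw [hy, hfix]
  exact hg0 this.symm

lemma orbit_no_min (φ : G →* Equiv.Perm ℝ) (SM : ∀ g : G, StrictMono (φ g)) {y : ℝ}
    (hnt : ∃ g : G, φ g y ≠ y) {u : ℝ} (hu : u ∈ orbit φ y) :
    ∃ w ∈ orbit φ y, w < u := by
  by_contra h
  push_neg at h
  have hfix : ∀ g : G, φ g u = u := by
    intro g
    have h1 : u ≤ φ g u := h _ (orbit_apply_mem φ g hu)
    have h2 : u ≤ φ g⁻¹ u := h _ (orbit_apply_mem φ g⁻¹ hu)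
    have h3 : φ g u ≤ u := by
      have := (SM g).monotone h2
      rwa [show φ g (φ g⁻¹ u) = u by rw [map_inv]; exact (φ g).apply_symm_apply u] at this
    exact le_antisymm h3 h1
  obtain ⟨g0, hg0⟩ := hnt
  obtain ⟨k, hk⟩ := hu
  have hy : y = φ k⁻¹ u := by rw [hk, map_inv]; exact ((φ k).symm_apply_apply y).symm
  have h1 : φ g0 y = φ (g0 * k⁻¹) u := by rw [hy, map_mul]; simp
  rw [h1, hfix (g0 * k⁻¹)] at hg0
  have : y = u := by rw [hy, hfix]
  exact hg0 this.symm

section Ext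

/-- extension of a map of `ℚ` to a map of `ℝ` -/
noncomputable def ratExt (f : ℚ → ℚ) (x : ℝ) : ℝ :=
  sSup ((fun q : ℚ => (f q : ℝ)) '' {q : ℚ | (q : ℝ) < x})

lemma ratExt_set_nonempty (f : ℚ → ℚ) (x : ℝ) :
    ((fun q : ℚ => (f q : ℝ)) '' {q : ℚ | (q : ℝ) < x}).Nonempty := by
  obtain ⟨q, hq⟩ := exists_rat_lt x
  exact ⟨f q, ⟨q, hq, rfl⟩⟩

lemma ratExt_bddAbove {f : ℚ → ℚ} (hf : StrictMono f) (x : ℝ) :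
    BddAbove ((fun q : ℚ => (f q : ℝ)) '' {q : ℚ | (q : ℝ) < x}) := by
  obtain ⟨r, hr⟩ := exists_rat_gt x
  refine ⟨f r, ?_⟩
  rintro z ⟨q, hq, rfl⟩
  have : q < r := by exact_mod_cast hq.trans hr
  show (f q : ℝ) ≤ (f r : ℝ)
  exact_mod_cast (hf this).le

lemma le_ratExt {f : ℚ → ℚ} (hf : StrictMono f) {q : ℚ} {x : ℝ} (h : (q : ℝ) < x) :
    (f q : ℝ) ≤ ratExt f x :=
  le_csSup (ratExt_bddAbove hf x) ⟨q, h, rfl⟩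

lemma ratExt_le (f : ℚ → ℚ) {x y : ℝ} (h : ∀ q : ℚ, (q : ℝ) < x → (f q : ℝ) ≤ y) :
    ratExt f x ≤ y := by
  apply csSup_le (ratExt_set_nonempty f x)
  rintro z ⟨q, hq, rfl⟩
  exact h q hq

lemma ratExt_cast {f : ℚ → ℚ} (hf : StrictMono f) (hfs : Function.Surjective f) (q₀ : ℚ) :
    ratExt f (q₀ : ℝ) = (f q₀ : ℝ) := by
  apply le_antisymm
  · exact ratExt_le f fun q hq => by exact_mod_cast (hf (by exact_mod_cast hq)).le
  · by_contra h
    push_neg at h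
    obtain ⟨m, hm1, hm2⟩ := exists_rat_btwn h
    obtain ⟨q', hq'⟩ := hfs m
    have hq'q : q' < q₀ := by
      have : f q' < f q₀ := by rw [hq']; exact_mod_cast hm2
      exact hf.lt_iff_lt.mp this
    have := le_ratExt hf (x := (q₀ : ℝ)) (q := q') (by exact_mod_cast hq'q)
    rw [hq'] at this
    exact absurd (lt_of_le_of_lt this hm1) (lt_irrefl _)

lemma ratExt_strictMono {f : ℚ → ℚ} (hf : StrictMono f) : StrictMono (ratExt f) := by
  intro x y hxy
  obtain ⟨q₁, hq₁, hq₁'⟩ := exists_rat_btwn hxy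
  obtain ⟨q₂, hq₂, hq₂'⟩ := exists_rat_btwn hq₁'
  have h1 : ratExt f x ≤ (f q₁ : ℝ) := by
    apply ratExt_le
    intro q hq
    have : q < q₁ := by exact_mod_cast hq.trans hq₁
    exact_mod_cast (hf this).le
  have h2 : (f q₂ : ℝ) ≤ ratExt f y := le_ratExt hf hq₂'
  have h3 : (f q₁ : ℝ) < (f q₂ : ℝ) := by
    exact_mod_cast hf (by exact_mod_cast hq₂)
  exact lt_of_le_of_lt h1 (lt_of_lt_of_le h3 h2)

lemma ratExt_comp {f g : ℚ → ℚ} (hf : StrictMono f) (hg : StrictMono g) (x : ℝ) :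
    ratExt f (ratExt g x) = ratExt (f ∘ g) x := by
  apply le_antisymm
  · apply ratExt_le
    intro q hq
    obtain ⟨z, hz, hz'⟩ := exists_lt_of_lt_csSup (ratExt_set_nonempty g x) hq
    obtain ⟨r, hr, rfl⟩ := hz
    have hz2 : (q : ℝ) < ((g r : ℚ) : ℝ) := hz'
    have hqgr : q < g r := by exact_mod_cast hz2
    calc (f q : ℝ) ≤ (f (g r) : ℝ) := by exact_mod_cast (hf hqgr).le
    _ ≤ ratExt (f ∘ g) x := le_ratExt (hf.comp hg) hr
  · apply ratExt_le
    intro r hr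
    have : (g r : ℝ) < ratExt g x := by
      obtain ⟨r', hr1, hr2⟩ := exists_rat_btwn hr
      have h1 : (g r : ℝ) < (g r' : ℝ) := by exact_mod_cast hg (by exact_mod_cast hr1)
      exact lt_of_lt_of_le h1 (le_ratExt hg hr2)
    exact le_ratExt hf this

lemma ratExt_id (x : ℝ) : ratExt (fun q => q) x = x := by
  apply le_antisymm
  · exact ratExt_le _ fun q hq => hq.le
  · by_contra h
    push_neg at h
    obtain ⟨m, hm1, hm2⟩ := exists_rat_btwn h
    have := le_ratExt (f := fun q => q) strictMono_id (x := x) (q := m) hm2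
    exact absurd (lt_of_le_of_lt this hm1) (lt_irrefl _)

lemma ratExt_congr {f g : ℚ → ℚ} (h : ∀ q, f q = g q) (x : ℝ) : ratExt f x = ratExt g x := by
  have : f = g := funext h
  rw [this]

end Ext

/-- Main construction: a point whose orbit is nontrivial and densely ordered in itself
yields a topologically transitive action. -/
theorem left_of_denseOrbit (φ : G →* Equiv.Perm ℝ) (SM : ∀ g : G, StrictMono (φ g)) (y : ℝ)
    (hnt : ∃ g : G, φ g y ≠ y)
    (hdi : ∀ u v : ℝ, u ∈ orbit φ y → v ∈ orbit φ y → u < v →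
      ∃ w ∈ orbit φ y, u < w ∧ w < v) :
    ∃ ψ : G →* Equiv.Perm ℝ, (∀ g : G, StrictMono (ψ g)) ∧
      ∃ x : ℝ, Dense {y' : ℝ | ∃ g : G, y' = ψ g x} := by
  classical
  set X : Set ℝ := orbit φ y with hX
  have hXc : X.Countable := by
    have : X = Set.range (fun g : G => φ g y) := by
      ext z; simp [hX, orbit, Set.mem_range, eq_comm]
    rw [this]; exact Set.countable_range _
  haveI : Countable ↥X := hXc.to_subtype
  haveI : Nonempty ↥X := ⟨⟨y, orbit_self φ y⟩⟩
  haveI : DenselyOrdered ↥X := by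
    constructor
    rintro ⟨a, ha⟩ ⟨b, hb⟩ hab
    have hab' : a < b := hab
    obtain ⟨w, hw, h1, h2⟩ := hdi a b ha hb hab'
    exact ⟨⟨w, hw⟩, h1, h2⟩
  haveI : NoMaxOrder ↥X := by
    constructor
    rintro ⟨a, ha⟩
    obtain ⟨w, hw, h1⟩ := orbit_no_max φ SM hnt ha
    exact ⟨⟨w, hw⟩, h1⟩
  haveI : NoMinOrder ↥X := by
    constructor
    rintro ⟨a, ha⟩
    obtain ⟨w, hw, h1⟩ := orbit_no_min φ SM hnt ha
    exact ⟨⟨w, hw⟩, h1⟩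
  obtain ⟨e⟩ : Nonempty (↥X ≃o ℚ) := Order.iso_of_countable_dense ↥X ℚ
  -- the action on ℚ
  have memX : ∀ (g : G) (z : ↥X), φ g (z : ℝ) ∈ X := fun g z => orbit_apply_mem φ g z.2
  set r : G → ℚ → ℚ := fun g q => e ⟨φ g (e.symm q : ℝ), memX g (e.symm q)⟩ with hr
  have hrmul : ∀ (g h : G) (q : ℚ), r (g * h) q = r g (r h q) := by
    intro g h q
    simp only [hr]
    congr 1
    apply Subtype.ext
    simp only [OrderIso.symm_apply_apply]
    rw [map_mul]
    rfl
  have hrone : ∀ q : ℚ, r 1 q = q := by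
    intro q
    simp only [hr]
    have : (⟨φ 1 (e.symm q : ℝ), memX 1 (e.symm q)⟩ : ↥X) = e.symm q := by
      apply Subtype.ext; simp
    rw [this, OrderIso.apply_symm_apply]
  have hrmono : ∀ g : G, StrictMono (r g) := by
    intro g q q' hq
    simp only [hr]
    rw [e.lt_iff_lt]
    show φ g (e.symm q : ℝ) < φ g (e.symm q' : ℝ)
    exact SM g (by exact_mod_cast e.symm.lt_iff_lt.mpr hq)
  have hrsurj : ∀ g : G, Function.Surjective (r g) := by
    intro g q
    refine ⟨r g⁻¹ q, ?_⟩
    rw [← hrmul, mul_inv_cancel, hrone]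
  -- the extended action on ℝ
  set Ψ : G → ℝ → ℝ := fun g => ratExt (r g) with hΨ
  have hΨcomp : ∀ (g h : G) (x : ℝ), Ψ g (Ψ h x) = Ψ (g * h) x := by
    intro g h x
    simp only [hΨ]
    rw [ratExt_comp (hrmono g) (hrmono h)]
    exact ratExt_congr (fun q => (hrmul g h q).symm) x
  have hΨone : ∀ x : ℝ, Ψ 1 x = x := by
    intro x
    simp only [hΨ]
    rw [ratExt_congr hrone x]
    exact ratExt_id x
  have hΨinv : ∀ (g : G) (x : ℝ), Ψ g⁻¹ (Ψ g x) = x := by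
    intro g x
    rw [hΨcomp, inv_mul_cancel, hΨone]
  have hΨinv' : ∀ (g : G) (x : ℝ), Ψ g (Ψ g⁻¹ x) = x := by
    intro g x
    rw [hΨcomp, mul_inv_cancel, hΨone]
  set ψe : G → Equiv.Perm ℝ := fun g =>
    { toFun := Ψ g
      invFun := Ψ g⁻¹
      left_inv := hΨinv g
      right_inv := hΨinv' g } with hψe
  set ψ : G →* Equiv.Perm ℝ :=
    { toFun := ψe
      map_one' := by
        apply Equiv.ext; intro x
        simp only [hψe]
        show Ψ 1 x = x
        exact hΨone x
      map_mul' := by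
        intro g h
        apply Equiv.ext; intro x
        show Ψ (g * h) x = Ψ g (Ψ h x)
        exact (hΨcomp g h x).symm } with hψ
  refine ⟨ψ, ?_, ?_⟩
  · intro g
    show StrictMono (Ψ g)
    exact ratExt_strictMono (hrmono g)
  · refine ⟨((e ⟨y, orbit_self φ y⟩ : ℚ) : ℝ), ?_⟩
    have hsub : Set.range (fun q : ℚ => (q : ℝ)) ⊆
        {y' : ℝ | ∃ g : G, y' = (ψ g) ((e ⟨y, orbit_self φ y⟩ : ℚ) : ℝ)} := by
      rintro z ⟨q, rfl⟩
      obtain ⟨g, hg⟩ := (e.symm q).2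
      refine ⟨g, ?_⟩
      show (q : ℝ) = Ψ g _
      have h1 : Ψ g ((e ⟨y, orbit_self φ y⟩ : ℚ) : ℝ) = (r g (e ⟨y, orbit_self φ y⟩) : ℝ) :=
        ratExt_cast (hrmono g) (hrsurj g) _
      have h2 : r g (e ⟨y, orbit_self φ y⟩) = q := by
        simp only [hr]
        rw [OrderIso.symm_apply_apply]
        have : (⟨φ g y, memX g ⟨y, orbit_self φ y⟩⟩ : ↥X) = e.symm q := by
          apply Subtype.ext
          exact hg.symm
        rw [this, OrderIso.apply_symm_apply]
      rw [h1, h2]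
    exact Dense.mono hsub Rat.denseRange_cast


/-- image of a set under a group element -/
def act (φ : G →* Equiv.Perm ℝ) (g : G) (S : Set ℝ) : Set ℝ := φ g '' S

/-- `g` stabilizes `S` setwise -/
def Stabs (φ : G →* Equiv.Perm ℝ) (S : Set ℝ) (g : G) : Prop := act φ g S = S

/-- orbit of `y` under the setwise stabilizer of `S` -/
def orbIn (φ : G →* Equiv.Perm ℝ) (S : Set ℝ) (y : ℝ) : Set ℝ :=
  {z | ∃ g : G, Stabs φ S g ∧ z = φ g y}

/-- a "nice" set: an invariant-or-moved-off open order-connected set -/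
def Nice (φ : G →* Equiv.Perm ℝ) (S : Set ℝ) : Prop :=
  IsOpen S ∧ S.OrdConnected ∧ S.Nonempty ∧
    ∀ g : G, Stabs φ S g ∨ act φ g S ∩ S = ∅

variable (φ : G →* Equiv.Perm ℝ)

lemma act_one (S : Set ℝ) : act φ 1 S = S := by simp [act]

lemma act_mul (g h : G) (S : Set ℝ) : act φ g (act φ h S) = act φ (g * h) S := by
  simp only [act, map_mul]
  rw [← Set.image_comp]
  rfl

lemma mem_act_iff {g : G} {S : Set ℝ} {z : ℝ} : z ∈ act φ g S ↔ φ g⁻¹ z ∈ S := by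
  constructor
  · rintro ⟨w, hw, rfl⟩
    rw [map_inv]
    simpa using hw
  · intro h
    refine ⟨φ g⁻¹ z, h, ?_⟩
    rw [map_inv]
    simp

lemma mem_act_of_mem {g : G} {S : Set ℝ} {x : ℝ} (hx : x ∈ S) : φ g x ∈ act φ g S :=
  ⟨x, hx, rfl⟩

lemma stabs_one (S : Set ℝ) : Stabs φ S 1 := act_one φ S

lemma stabs_mul {S : Set ℝ} {g h : G} (hg : Stabs φ S g) (hh : Stabs φ S h) :
    Stabs φ S (g * h) := by
  unfold Stabs at *
  rw [← act_mul, hh, hg]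

lemma stabs_inv {S : Set ℝ} {g : G} (hg : Stabs φ S g) : Stabs φ S g⁻¹ := by
  unfold Stabs at *
  conv_lhs => rw [← hg]
  rw [act_mul, inv_mul_cancel, act_one]

lemma stabs_apply_mem {S : Set ℝ} {g : G} (hg : Stabs φ S g) {x : ℝ} (hx : x ∈ S) :
    φ g x ∈ S := hg ▸ mem_act_of_mem φ hx

lemma stabs_of_meet {S : Set ℝ} (hS : Nice φ S) {g : G} (h : (act φ g S ∩ S).Nonempty) :
    Stabs φ S g := by
  rcases hS.2.2.2 g with h1 | h1
  · exact h1
  · rw [h1] at h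
    exact absurd h Set.not_nonempty_empty

variable (SM : ∀ g : G, StrictMono (φ g))

include SM in
lemma act_Ioo (g : G) (a b : ℝ) : act φ g (Ioo a b) = Ioo (φ g a) (φ g b) := by
  ext z
  rw [mem_act_iff]
  have h1 : ∀ w : ℝ, φ g (φ g⁻¹ w) = w := by intro w; rw [map_inv]; simp
  constructor
  · rintro ⟨hz1, hz2⟩
    constructor
    · have := SM g hz1; rwa [h1] at this
    · have := SM g hz2; rwa [h1] at this
  · rintro ⟨hz1, hz2⟩
    constructor
    · have := SM g⁻¹ hz1
      rwa [show φ g⁻¹ (φ g a) = a by rw [map_inv]; simp] at this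
    · have := SM g⁻¹ hz2
      rwa [show φ g⁻¹ (φ g b) = b by rw [map_inv]; simp] at this

include SM in
lemma ordConnected_act {S : Set ℝ} (hS : S.OrdConnected) (g : G) :
    (act φ g S).OrdConnected := by
  constructor
  rintro x ⟨x', hx', rfl⟩ y ⟨y', hy', rfl⟩ z hz
  have h1 : ∀ w : ℝ, φ g (φ g⁻¹ w) = w := by intro w; rw [map_inv]; simp
  have hz1 : x' ≤ φ g⁻¹ z := by
    have := (SM g).le_iff_le (a := x') (b := φ g⁻¹ z)
    rw [h1] at this
    exact this.mp hz.1
  have hz2 : φ g⁻¹ z ≤ y' := by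
    have := (SM g).le_iff_le (a := φ g⁻¹ z) (b := y')
    rw [h1] at this
    exact this.mp hz.2
  have : φ g⁻¹ z ∈ S := hS.out hx' hy' ⟨hz1, hz2⟩
  exact ⟨φ g⁻¹ z, this, h1 z⟩

lemma act_eq_or_disjoint {S : Set ℝ} (hS : Nice φ S) (g k : G) :
    act φ g S = act φ k S ∨ act φ g S ∩ act φ k S = ∅ := by
  rcases hS.2.2.2 (k⁻¹ * g) with h | h
  · left
    have := congrArg (act φ k) h
    rw [act_mul, ← mul_assoc, mul_inv_cancel, one_mul] at this
    exact this
  · right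
    have := congrArg (act φ k) (h : act φ (k⁻¹ * g) S ∩ S = ∅)
    rw [show act φ k (act φ (k⁻¹ * g) S ∩ S) = act φ k (act φ (k⁻¹ * g) S) ∩ act φ k S by
      exact Set.image_inter (φ k).injective, act_mul, ← mul_assoc, mul_inv_cancel, one_mul] at this
    simpa [act] using this

lemma orbIn_self {S : Set ℝ} (y : ℝ) : y ∈ orbIn φ S y :=
  ⟨1, stabs_one φ S, by simp⟩

lemma orbIn_subset {S : Set ℝ} {y : ℝ} (hy : y ∈ S) : orbIn φ S y ⊆ S := by
  rintro z ⟨g, hg, rfl⟩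
  exact stabs_apply_mem φ hg hy

lemma orbIn_subset_orbit {S : Set ℝ} {y : ℝ} : orbIn φ S y ⊆ orbit φ y := by
  rintro z ⟨g, _, rfl⟩
  exact ⟨g, rfl⟩

lemma orbIn_apply_mem {S : Set ℝ} {y z : ℝ} {h : G} (hh : Stabs φ S h)
    (hz : z ∈ orbIn φ S y) : φ h z ∈ orbIn φ S y := by
  obtain ⟨g, hg, rfl⟩ := hz
  exact ⟨h * g, stabs_mul φ hh hg, by rw [map_mul]; rfl⟩

lemma orbIn_eq_of_mem {S : Set ℝ} {y u : ℝ} (hu : u ∈ orbIn φ S y) :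
    orbIn φ S u = orbIn φ S y := by
  obtain ⟨g, hg, rfl⟩ := hu
  ext z
  constructor
  · rintro ⟨k, hk, rfl⟩
    exact ⟨k * g, stabs_mul φ hk hg, by rw [map_mul]; rfl⟩
  · rintro ⟨k, hk, rfl⟩
    refine ⟨k * g⁻¹, stabs_mul φ hk (stabs_inv φ hg), ?_⟩
    rw [map_mul, map_inv]
    simp

lemma orbIn_eq_orbit_inter {S : Set ℝ} (hS : Nice φ S) {y : ℝ} (hy : y ∈ S) :
    orbIn φ S y = orbit φ y ∩ S := by
  apply Set.Subset.antisymm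
  · intro z hz
    exact ⟨orbIn_subset_orbit φ hz, orbIn_subset φ hy hz⟩
  · rintro z ⟨⟨g, rfl⟩, hzS⟩
    refine ⟨g, ?_, rfl⟩
    apply stabs_of_meet φ hS
    exact ⟨φ g y, mem_act_of_mem φ hy, hzS⟩

include SM in
lemma orbIn_no_max {S : Set ℝ} {y : ℝ}
    (hnt : ∃ w₁ ∈ orbIn φ S y, ∃ w₂ ∈ orbIn φ S y, w₁ ≠ w₂)
    {u : ℝ} (hu : u ∈ orbIn φ S y) : ∃ w ∈ orbIn φ S y, u < w := by
  by_contra h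
  push_neg at h
  have hfix : ∀ g : G, Stabs φ S g → φ g u = u := by
    intro g hg
    have h1 : φ g u ≤ u := h _ (orbIn_apply_mem φ hg hu)
    have h2 : φ g⁻¹ u ≤ u := h _ (orbIn_apply_mem φ (stabs_inv φ hg) hu)
    have h3 : u ≤ φ g u := by
      have := (SM g).monotone h2
      rwa [show φ g (φ g⁻¹ u) = u by rw [map_inv]; simp] at this
    exact le_antisymm h1 h3
  have horb : orbIn φ S y = {u} := by
    rw [← orbIn_eq_of_mem φ hu]
    ext z
    constructor
    · rintro ⟨g, hg, rfl⟩
      exact (hfix g hg)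
    · intro hz
      have hz' : z = u := hz
      rw [hz']
      exact orbIn_self φ u
  obtain ⟨w₁, hw₁, w₂, hw₂, hne⟩ := hnt
  rw [horb] at hw₁ hw₂
  exact hne (hw₁.trans hw₂.symm)

include SM in
lemma orbIn_no_min {S : Set ℝ} {y : ℝ}
    (hnt : ∃ w₁ ∈ orbIn φ S y, ∃ w₂ ∈ orbIn φ S y, w₁ ≠ w₂)
    {u : ℝ} (hu : u ∈ orbIn φ S y) : ∃ w ∈ orbIn φ S y, w < u := by
  by_contra h
  push_neg at h
  have hfix : ∀ g : G, Stabs φ S g → φ g u = u := by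
    intro g hg
    have h1 : u ≤ φ g u := h _ (orbIn_apply_mem φ hg hu)
    have h2 : u ≤ φ g⁻¹ u := h _ (orbIn_apply_mem φ (stabs_inv φ hg) hu)
    have h3 : φ g u ≤ u := by
      have := (SM g).monotone h2
      rwa [show φ g (φ g⁻¹ u) = u by rw [map_inv]; simp] at this
    exact le_antisymm h3 h1
  have horb : orbIn φ S y = {u} := by
    rw [← orbIn_eq_of_mem φ hu]
    ext z
    constructor
    · rintro ⟨g, hg, rfl⟩
      exact (hfix g hg)
    · intro hz
      have hz' : z = u := hz
      rw [hz']
      exact orbIn_self φ u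
  obtain ⟨w₁, hw₁, w₂, hw₂, hne⟩ := hnt
  rw [horb] at hw₁ hw₂
  exact hne (hw₁.trans hw₂.symm)

/-- two disjoint order-connected sets are completely ordered -/
lemma ordconn_disjoint_lt {A B : Set ℝ} (hA : A.OrdConnected) (hB : B.OrdConnected)
    (hd : A ∩ B = ∅) {a b : ℝ} (ha : a ∈ A) (hb : b ∈ B) (hab : a < b) :
    ∀ x ∈ A, ∀ y ∈ B, x < y := by
  intro x hx y hy
  by_contra h
  push_neg at h
  have hxb : x < b := by
    by_contra h2
    push_neg at h2
    have : b ∈ A := hA.out ha hx ⟨hab.le, h2⟩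
    exact absurd (Set.mem_inter this hb) (by rw [hd]; exact Set.notMem_empty b)
  have : x ∈ B := hB.out hy hb ⟨h, hxb.le⟩
  exact absurd (Set.mem_inter hx this) (by rw [hd]; exact Set.notMem_empty x)


include SM in
lemma gap_nice {S : Set ℝ} (hS : Nice φ S) {y u v : ℝ} (hy : y ∈ S)
    (hu : u ∈ orbIn φ S y) (hv : v ∈ orbIn φ S y) (huv : u < v)
    (hgap : Ioo u v ∩ orbIn φ S y = ∅) :
    Nice φ (Ioo u v) := by
  have hIooS : Ioo u v ⊆ S :=
    Set.Subset.trans Set.Ioo_subset_Icc_self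
      (hS.2.1.out (orbIn_subset φ hy hu) (orbIn_subset φ hy hv))
  have notin : ∀ z ∈ orbIn φ S y, z ∉ Ioo u v := by
    intro z hz hm
    have := Set.mem_inter hm hz
    rw [hgap] at this
    exact this
  refine ⟨isOpen_Ioo, Set.ordConnected_Ioo, Set.nonempty_Ioo.mpr huv, ?_⟩
  intro g
  by_cases hE : act φ g (Ioo u v) ∩ Ioo u v = ∅
  · right; exact hE
  · left
    obtain ⟨w, hw1, hw2⟩ := Set.nonempty_iff_ne_empty.mpr hE
    obtain ⟨x, hx, rfl⟩ := hw1
    have hgS : Stabs φ S g :=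
      stabs_of_meet φ hS ⟨φ g x, mem_act_of_mem φ (hIooS hx), hIooS hw2⟩
    have hgu : φ g u ∈ orbIn φ S y := orbIn_apply_mem φ hgS hu
    have hgv : φ g v ∈ orbIn φ S y := orbIn_apply_mem φ hgS hv
    have h1 : φ g u < φ g x := SM g hx.1
    have h2 : φ g x < φ g v := SM g hx.2
    have hule : φ g u ≤ u := by
      by_contra hc
      push_neg at hc
      exact notin _ hgu ⟨hc, lt_trans h1 hw2.2⟩
    have hvge : v ≤ φ g v := by
      by_contra hc
      push_neg at hc
      exact notin _ hgv ⟨lt_trans hw2.1 h2, hc⟩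
    have himg : Ioo (φ g u) (φ g v) ∩ orbIn φ S y = ∅ := by
      apply Set.eq_empty_iff_forall_notMem.mpr
      rintro z ⟨hz1, hz2⟩
      have hz1' : φ g⁻¹ z ∈ Ioo u v := by
        constructor
        · have := SM g⁻¹ hz1.1
          rwa [show φ g⁻¹ (φ g u) = u by rw [map_inv]; simp] at this
        · have := SM g⁻¹ hz1.2
          rwa [show φ g⁻¹ (φ g v) = v by rw [map_inv]; simp] at this
      exact notin _ (orbIn_apply_mem φ (stabs_inv φ hgS) hz2) hz1'
    have hueq : φ g u = u := by
      rcases lt_or_eq_of_le hule with hlt | he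
      · exfalso
        have : u ∈ Ioo (φ g u) (φ g v) ∩ orbIn φ S y :=
          ⟨⟨hlt, lt_of_lt_of_le huv hvge⟩, hu⟩
        rw [himg] at this
        exact this
      · exact he
    have hveq : φ g v = v := by
      rcases lt_or_eq_of_le hvge with hlt | he
      · exfalso
        have : v ∈ Ioo (φ g u) (φ g v) ∩ orbIn φ S y :=
          ⟨⟨by rw [hueq]; exact huv, hlt⟩, hv⟩
        rw [himg] at this
        exact this
      · exact he.symm
    show act φ g (Ioo u v) = Ioo u v
    rw [act_Ioo φ SM, hueq, hveq]

include SM in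
lemma gap_moves {S : Set ℝ} {y u v : ℝ}
    (hu : u ∈ orbIn φ S y) (hv : v ∈ orbIn φ S y) (huv : u < v)
    (hgap : Ioo u v ∩ orbIn φ S y = ∅) {p : ℝ} (hp : p ∈ Ioo u v) :
    ∃ h : G, Stabs φ S h ∧ φ h p ≠ p := by
  by_contra hc
  push_neg at hc
  have notin : ∀ z ∈ orbIn φ S y, z ∉ Ioo u v := by
    intro z hz hm
    have := Set.mem_inter hm hz
    rw [hgap] at this
    exact this
  have hfix : ∀ g : G, Stabs φ S g → φ g u = u := by
    intro g hg
    have h1 : φ g u < p := by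
      have := SM g hp.1
      rwa [hc g hg] at this
    have hle : φ g u ≤ u := by
      by_contra hg2
      push_neg at hg2
      exact notin _ (orbIn_apply_mem φ hg hu) ⟨hg2, lt_trans h1 hp.2⟩
    have h1' : φ g⁻¹ u < p := by
      have := SM g⁻¹ hp.1
      rwa [show φ g⁻¹ p = p by
        have := hc g hg
        conv_lhs => rw [← this]
        rw [map_inv]; simp] at this
    have hle' : φ g⁻¹ u ≤ u := by
      by_contra hg2
      push_neg at hg2
      exact notin _ (orbIn_apply_mem φ (stabs_inv φ hg) hu) ⟨hg2, lt_trans h1' hp.2⟩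
    have hge : u ≤ φ g u := by
      have := (SM g).monotone hle'
      rwa [show φ g (φ g⁻¹ u) = u by rw [map_inv]; simp] at this
    exact le_antisymm hle hge
  have horb : orbIn φ S y = {u} := by
    rw [← orbIn_eq_of_mem φ hu]
    ext z
    constructor
    · rintro ⟨g, hg, rfl⟩
      exact hfix g hg
    · intro hz
      have hz' : z = u := hz
      rw [hz']
      exact orbIn_self φ u
  have hvu : v = u := by
    have := hv
    rw [horb] at this
    exact this
  exact absurd hvu (ne_of_gt huv)

lemma nontrivial_exists
    (hNW : ∀ a b : ℝ, a < b → ∃ g : G,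
      (∃ x ∈ Ioo a b, φ g x ≠ x) ∧ ((φ g '' Ioo a b) ∩ Ioo a b).Nonempty)
    {S : Set ℝ} (hS : Nice φ S) :
    ∃ y ∈ S, ∃ h : G, Stabs φ S h ∧ φ h y ≠ y := by
  obtain ⟨x₀, hx₀⟩ := hS.2.2.1
  obtain ⟨ε, hε, hball⟩ := Metric.isOpen_iff.mp hS.1 x₀ hx₀
  rw [Real.ball_eq_Ioo] at hball
  have hab : x₀ - ε < x₀ + ε := by linarith
  obtain ⟨g, ⟨x, hxI, hmove⟩, ⟨w, hw1, hw2⟩⟩ := hNW _ _ hab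
  obtain ⟨vv, hvv, rfl⟩ := hw1
  have hstab : Stabs φ S g :=
    stabs_of_meet φ hS ⟨φ g vv, mem_act_of_mem φ (hball hvv), hball hw2⟩
  exact ⟨x, hball hxI, g, hstab, hmove⟩

/-- one recursion step: pass to a gap of a stabilizer orbit -/
def StepRel (S T : Set ℝ) : Prop :=
  ∃ y u v : ℝ, y ∈ S ∧ u ∈ orbIn φ S y ∧ v ∈ orbIn φ S y ∧
    u < v ∧ Ioo u v ∩ orbIn φ S y = ∅ ∧ T = Ioo u v

include SM in
lemma step_exists
    (hNW : ∀ a b : ℝ, a < b → ∃ g : G,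
      (∃ x ∈ Ioo a b, φ g x ≠ x) ∧ ((φ g '' Ioo a b) ∩ Ioo a b).Nonempty)
    (hGap : ∀ y : ℝ, (∃ g : G, φ g y ≠ y) → ∃ U V : ℝ,
      U ∈ orbit φ y ∧ V ∈ orbit φ y ∧ U < V ∧ Ioo U V ∩ orbit φ y = ∅)
    {S : Set ℝ} (hS : Nice φ S) : ∃ T, StepRel φ S T := by
  obtain ⟨y, hy, h, hstab, hmove⟩ := nontrivial_exists φ hNW hS
  have hnt' : ∃ g : G, φ g y ≠ y := ⟨h, hmove⟩
  have hntOrb : ∃ w₁ ∈ orbIn φ S y, ∃ w₂ ∈ orbIn φ S y, w₁ ≠ w₂ :=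
    ⟨φ h y, ⟨h, hstab, rfl⟩, y, orbIn_self φ y, hmove⟩
  obtain ⟨U, V, hU, hV, hUV, hgap⟩ := hGap y hnt'
  obtain ⟨g₁, hg₁⟩ := hU
  obtain ⟨g₂, hg₂⟩ := hV
  rcases act_eq_or_disjoint φ hS g₁ g₂ with hcase | hcase
  · have hU' : φ g₁⁻¹ U = y := by rw [hg₁, map_inv]; simp
    have hVmem : V ∈ act φ g₁ S := by
      rw [hcase, hg₂]
      exact mem_act_of_mem φ hy
    have hv'S : φ g₁⁻¹ V ∈ S := (mem_act_iff φ).mp hVmem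
    have hv'orb : φ g₁⁻¹ V ∈ orbit φ y := ⟨g₁⁻¹ * g₂, by rw [hg₂, map_mul]; rfl⟩
    have hv'in : φ g₁⁻¹ V ∈ orbIn φ S y := by
      rw [orbIn_eq_orbit_inter φ hS hy]
      exact ⟨hv'orb, hv'S⟩
    have hlt : y < φ g₁⁻¹ V := by
      rw [← hU']
      exact SM g₁⁻¹ hUV
    refine ⟨Ioo y (φ g₁⁻¹ V), y, y, φ g₁⁻¹ V, hy, orbIn_self φ y, hv'in, hlt, ?_, rfl⟩
    apply Set.eq_empty_iff_forall_notMem.mpr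
    rintro z ⟨hz1, hz2⟩
    have hzorb : z ∈ orbit φ y := orbIn_subset_orbit φ hz2
    obtain ⟨k, rfl⟩ := hzorb
    have hmem : φ g₁ (φ k y) ∈ Ioo U V ∩ orbit φ y := by
      refine ⟨⟨?_, ?_⟩, ⟨g₁ * k, by rw [map_mul]; rfl⟩⟩
      · rw [hg₁]
        exact SM g₁ hz1.1
      · have := SM g₁ hz1.2
        rwa [show φ g₁ (φ g₁⁻¹ V) = V by rw [map_inv]; simp] at this
    rw [hgap] at hmem
    exact hmem
  · exfalso
    have hconn1 := ordConnected_act φ SM hS.2.1 g₁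
    have hconn2 := ordConnected_act φ SM hS.2.1 g₂
    obtain ⟨w₀, hw₀, hw₀y⟩ := orbIn_no_max φ SM hntOrb (orbIn_self φ y)
    have hwS1 : φ g₁ w₀ ∈ act φ g₁ S := mem_act_of_mem φ (orbIn_subset φ hy hw₀)
    have hUgt : U < φ g₁ w₀ := by
      rw [hg₁]
      exact SM g₁ hw₀y
    have hUin : U ∈ act φ g₁ S := by
      rw [hg₁]; exact mem_act_of_mem φ hy
    have hVin : V ∈ act φ g₂ S := by
      rw [hg₂]; exact mem_act_of_mem φ hy
    have hltV : φ g₁ w₀ < V :=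
      ordconn_disjoint_lt hconn1 hconn2 hcase hUin hVin hUV _ hwS1 _ hVin
    obtain ⟨k₀, hk₀⟩ := orbIn_subset_orbit φ hw₀
    have hmem : φ g₁ w₀ ∈ Ioo U V ∩ orbit φ y := by
      refine ⟨⟨hUgt, hltV⟩, ?_⟩
      rw [hk₀]
      exact ⟨g₁ * k₀, by rw [map_mul]; rfl⟩
    rw [hgap] at hmem
    exact hmem

include SM in
lemma no_accum
    (hGap : ∀ y : ℝ, (∃ g : G, φ g y ≠ y) → ∃ U V : ℝ,
      U ∈ orbit φ y ∧ V ∈ orbit φ y ∧ U < V ∧ Ioo U V ∩ orbit φ y = ∅)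
    {p : ℝ} (hnt : ∃ g : G, φ g p ≠ p)
    (hab : (∀ ε > (0:ℝ), ∃ z ∈ orbit φ p, p < z ∧ z < p + ε) ∨
           (∀ ε > (0:ℝ), ∃ z ∈ orbit φ p, p - ε < z ∧ z < p)) : False := by
  obtain ⟨U, V, hU, hV, hUV, hgap⟩ := hGap p hnt
  rcases hab with habove | hbelow
  · obtain ⟨k, hk⟩ := hU
    have hpw : p < φ k⁻¹ V := by
      have h0 : φ k⁻¹ U = p := by rw [hk, map_inv]; simp
      rw [← h0]
      exact SM k⁻¹ hUV
    obtain ⟨z, hz, hz1, hz2⟩ := habove (φ k⁻¹ V - p) (by linarith)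
    have hz2' : z < φ k⁻¹ V := by linarith
    obtain ⟨m, hm⟩ := hz
    have hmem : φ k z ∈ Ioo U V ∩ orbit φ p := by
      refine ⟨⟨?_, ?_⟩, ?_⟩
      · rw [hk]
        exact SM k hz1
      · have := SM k hz2'
        rwa [show φ k (φ k⁻¹ V) = V by rw [map_inv]; simp] at this
      · rw [hm]
        exact ⟨k * m, by rw [map_mul]; rfl⟩
    rw [hgap] at hmem
    exact hmem
  · obtain ⟨k, hk⟩ := hV
    have hwp : φ k⁻¹ U < p := by
      have h0 : φ k⁻¹ V = p := by rw [hk, map_inv]; simp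
      rw [← h0]
      exact SM k⁻¹ hUV
    obtain ⟨z, hz, hz1, hz2⟩ := hbelow (p - φ k⁻¹ U) (by linarith)
    have hz1' : φ k⁻¹ U < z := by linarith
    obtain ⟨m, hm⟩ := hz
    have hmem : φ k z ∈ Ioo U V ∩ orbit φ p := by
      refine ⟨⟨?_, ?_⟩, ?_⟩
      · have := SM k hz1'
        rwa [show φ k (φ k⁻¹ U) = U by rw [map_inv]; simp] at this
      · rw [hk]
        exact SM k hz2
      · rw [hm]
        exact ⟨k * m, by rw [map_mul]; rfl⟩
    rw [hgap] at hmem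
    exact hmem


section CPART

open Order (succ lt_succ lt_succ_iff succ_le_of_lt)

variable (hNW : ∀ a b : ℝ, a < b → ∃ g : G,
      (∃ x ∈ Ioo a b, φ g x ≠ x) ∧ ((φ g '' Ioo a b) ∩ Ioo a b).Nonempty)
variable (hGap : ∀ y : ℝ, (∃ g : G, φ g y ≠ y) → ∃ U V : ℝ,
      U ∈ orbit φ y ∧ V ∈ orbit φ y ∧ U < V ∧ Ioo U V ∩ orbit φ y = ∅)

lemma nice_univ : Nice φ (Set.univ : Set ℝ) := by
  refine ⟨isOpen_univ, Set.ordConnected_univ, Set.univ_nonempty, fun g => Or.inl ?_⟩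
  show act φ g Set.univ = Set.univ
  rw [act, Set.image_univ]
  exact (φ g).surjective.range_eq

lemma nice_eq_Ioo {S : Set ℝ} (hS : Nice φ S) (hbb : BddBelow S) (hba : BddAbove S) :
    S = Ioo (sInf S) (sSup S) := by
  apply Set.Subset.antisymm
  · intro x hx
    obtain ⟨ε, hε, hball⟩ := Metric.isOpen_iff.mp hS.1 x hx
    rw [Real.ball_eq_Ioo] at hball
    constructor
    · have hmem : x - ε/2 ∈ S := hball ⟨by linarith, by linarith⟩
      have := csInf_le hbb hmem
      linarith
    · have hmem : x + ε/2 ∈ S := hball ⟨by linarith, by linarith⟩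
      have := le_csSup hba hmem
      linarith
  · rintro x ⟨h1, h2⟩
    obtain ⟨s₁, hs₁, hs₁x⟩ := exists_lt_of_csInf_lt hS.2.2.1 h1
    obtain ⟨s₂, hs₂, hs₂x⟩ := exists_lt_of_lt_csSup hS.2.2.1 h2
    exact hS.2.1.out hs₁ hs₂ ⟨hs₁x.le, hs₂x.le⟩

lemma ordConnected_interior {D : Set ℝ} (hD : D.OrdConnected) :
    (interior D).OrdConnected := by
  constructor
  intro x hx y hy z hz
  obtain ⟨εx, hεx, hbx⟩ := Metric.isOpen_iff.mp isOpen_interior x hx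
  obtain ⟨εy, hεy, hby⟩ := Metric.isOpen_iff.mp isOpen_interior y hy
  rw [Real.ball_eq_Ioo] at hbx hby
  have hx' : x - εx/2 ∈ D := interior_subset (hbx ⟨by linarith, by linarith⟩)
  have hy' : y + εy/2 ∈ D := interior_subset (hby ⟨by linarith, by linarith⟩)
  apply mem_interior.mpr
  refine ⟨Ioo (x - εx/2) (y + εy/2), ?_, isOpen_Ioo,
    ⟨by linarith [hz.1], by linarith [hz.2]⟩⟩
  intro w hw
  exact hD.out hx' hy' ⟨hw.1.le, hw.2.le⟩

include SM in
lemma act_interior (g : G) (A : Set ℝ) :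
    act φ g (interior A) = interior (act φ g A) := by
  have h := (StrictMono.orderIsoOfSurjective (⇑(φ g)) (SM g)
    (φ g).surjective).toHomeomorph.image_interior A
  exact h

/-- the choice of one recursion step -/
noncomputable def step (S : Set ℝ) : Set ℝ :=
  if h : ∃ T, StepRel φ S T then h.choose else ∅

lemma step_spec {S : Set ℝ} (h : ∃ T, StepRel φ S T) : StepRel φ S (step φ S) := by
  rw [step, dif_pos h]
  exact h.choose_spec

/-- the transfinite sequence of nested nice intervals -/
noncomputable def fseq : Ordinal.{0} → Set ℝ := fun o =>
  Ordinal.limitRecOn o Set.univ (fun _ ih => step φ ih)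
    (fun o _ ih => interior (⋂ (o' : Ordinal), ⋂ (h : o' < o), ih o' h))

lemma fseq_zero : fseq φ 0 = Set.univ := Ordinal.limitRecOn_zero _ _ _

lemma fseq_succ (o : Ordinal.{0}) : fseq φ (succ o) = step φ (fseq φ o) :=
  Ordinal.limitRecOn_succ _ _ _ _

lemma fseq_limit {o : Ordinal.{0}} (h : Order.IsSuccLimit o) :
    fseq φ o = interior (⋂ (o' : Ordinal.{0}), ⋂ (_ : o' < o), fseq φ o') := by
  rw [fseq, Ordinal.limitRecOn_limit _ _ _ _ h]
  rfl

/-- strict containment with room on both sides -/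
def SI (A B : Set ℝ) : Prop :=
  A ⊆ B ∧ ∃ u v : ℝ, u ∈ B ∧ v ∈ B ∧ ∀ x ∈ A, u < x ∧ x < v

lemma SI.trans {A B C : Set ℝ} (h1 : SI A B) (h2 : SI B C) : SI A C := by
  obtain ⟨hAB, _⟩ := h1
  obtain ⟨hBC, u, v, hu, hv, hb⟩ := h2
  exact ⟨hAB.trans hBC, u, v, hu, hv, fun x hx => hb x (hAB hx)⟩

include SM hNW hGap in
lemma limit_contradiction {o : Ordinal.{0}} (hlim : Order.IsSuccLimit o)
    (hN : ∀ o' < o, Nice φ (fseq φ o'))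
    (hSI : ∀ o₂ < o, ∀ o₁ < o₂, SI (fseq φ o₂) (fseq φ o₁))
    (hie : ¬ (interior (⋂ (o' : Ordinal), ⋂ (_ : o' < o), fseq φ o')).Nonempty) :
    False := by
  have h1o : (1 : Ordinal) < o := by
    have := hlim.succ_lt hlim.pos
    simpa using this
  have hchain : ∀ o₁ o₂ : Ordinal, o₁ ≤ o₂ → o₂ < o → fseq φ o₂ ⊆ fseq φ o₁ := by
    intro o₁ o₂ h12 h2
    rcases eq_or_lt_of_le h12 with rfl | h
    · exact subset_rfl
    · exact (hSI o₂ h2 o₁ h).1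
  have hbdd : ∀ o', 0 < o' → o' < o → BddBelow (fseq φ o') ∧ BddAbove (fseq φ o') := by
    intro o' h0 h
    obtain ⟨_, u, v, _, _, hb⟩ := hSI o' h 0 h0
    exact ⟨⟨u, fun x hx => (hb x hx).1.le⟩, ⟨v, fun x hx => (hb x hx).2.le⟩⟩
  have hIoo : ∀ o', 0 < o' → o' < o →
      fseq φ o' = Ioo (sInf (fseq φ o')) (sSup (fseq φ o')) := by
    intro o' h0 h
    exact nice_eq_Ioo φ (hN o' h) (hbdd o' h0 h).1 (hbdd o' h0 h).2
  have hne : ∀ o', o' < o → (fseq φ o').Nonempty := fun o' h => (hN o' h).2.2.1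
  have hinf_lt_sup : ∀ o', 0 < o' → o' < o → sInf (fseq φ o') < sSup (fseq φ o') := by
    intro o' h0 h
    have := hne o' h
    rw [hIoo o' h0 h] at this
    exact Set.nonempty_Ioo.mp this
  -- strict monotonicity of endpoints
  have hstrictA : ∀ o₁ o₂, 0 < o₁ → o₁ < o₂ → o₂ < o →
      sInf (fseq φ o₁) < sInf (fseq φ o₂) := by
    intro o₁ o₂ h0 h12 h2
    obtain ⟨hsub, u, v, hu, hv, hb⟩ := hSI o₂ h2 o₁ (h12)
    have hu' : sInf (fseq φ o₁) < u := by
      have := hu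
      rw [hIoo o₁ h0 (h12.trans h2)] at this
      exact this.1
    have hle : u ≤ sInf (fseq φ o₂) :=
      le_csInf (hne o₂ h2) (fun x hx => (hb x hx).1.le)
    exact lt_of_lt_of_le hu' hle
  have hstrictB : ∀ o₁ o₂, 0 < o₁ → o₁ < o₂ → o₂ < o →
      sSup (fseq φ o₂) < sSup (fseq φ o₁) := by
    intro o₁ o₂ h0 h12 h2
    obtain ⟨hsub, u, v, hu, hv, hb⟩ := hSI o₂ h2 o₁ (h12)
    have hv' : v < sSup (fseq φ o₁) := by
      have := hv
      rw [hIoo o₁ h0 (h12.trans h2)] at this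
      exact this.2
    have hle : sSup (fseq φ o₂) ≤ v :=
      csSup_le (hne o₂ h2) (fun x hx => (hb x hx).2.le)
    exact lt_of_le_of_lt hle hv'
  -- the collapse point
  set Aset : Set ℝ := (fun o' => sInf (fseq φ o')) '' {o' : Ordinal | 0 < o' ∧ o' < o}
    with hAset
  set Bset : Set ℝ := (fun o' => sSup (fseq φ o')) '' {o' : Ordinal | 0 < o' ∧ o' < o}
    with hBset
  have hANE : Aset.Nonempty := ⟨_, ⟨1, ⟨zero_lt_one, h1o⟩, rfl⟩⟩
  have hBNE : Bset.Nonempty := ⟨_, ⟨1, ⟨zero_lt_one, h1o⟩, rfl⟩⟩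
  have hABd : BddAbove Aset := by
    refine ⟨sSup (fseq φ 1), ?_⟩
    rintro x ⟨o', ⟨h0, h⟩, rfl⟩
    obtain ⟨z, hz⟩ := hne o' h
    have h1 : sInf (fseq φ o') ≤ z := csInf_le (hbdd o' h0 h).1 hz
    have h2 : z ∈ fseq φ 1 := hchain 1 o' (Order.one_le_iff_pos.mpr h0) h hz
    rw [hIoo 1 zero_lt_one h1o] at h2
    exact h1.trans h2.2.le
  set p : ℝ := sSup Aset with hp
  have hmemA : ∀ o', 0 < o' → o' < o → sInf (fseq φ o') ∈ Aset :=
    fun o' h0 h => ⟨o', ⟨h0, h⟩, rfl⟩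
  have hmemB : ∀ o', 0 < o' → o' < o → sSup (fseq φ o') ∈ Bset :=
    fun o' h0 h => ⟨o', ⟨h0, h⟩, rfl⟩
  -- p ≤ sSup (fseq φ (succ o')) for each o' < o
  have hple : ∀ o', o' < o → p ≤ sSup (fseq φ (succ o')) := by
    intro o' h
    have hso : succ o' < o := hlim.succ_lt h
    have hs0 : (0 : Ordinal) < succ o' := lt_of_le_of_lt zero_le (lt_succ o')
    apply csSup_le hANE
    rintro x ⟨o'', ⟨h0'', h''⟩, rfl⟩
    rcases le_or_gt o'' (succ o') with hle | hlt
    · have h1 : sInf (fseq φ o'') ≤ sInf (fseq φ (succ o')) :=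
        csInf_le_csInf (hbdd o'' h0'' h'').1 (hne _ hso) (hchain o'' (succ o') hle hso)
      exact h1.trans (hinf_lt_sup _ hs0 hso).le
    · have h1 : sInf (fseq φ o'') < sSup (fseq φ o'') := hinf_lt_sup _ h0'' h''
      have h2 : sSup (fseq φ o'') ≤ sSup (fseq φ (succ o')) :=
        csSup_le_csSup (hbdd _ hs0 hso).2 (hne _ h'') (hchain (succ o') o'' hlt.le h'')
      exact (h1.trans_le h2).le
  have claim1 : ∀ o', o' < o → p ∈ fseq φ o' := by
    intro o' h
    rcases eq_zero_or_pos o' with rfl | h0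
    · rw [fseq_zero]; trivial
    · have hso : succ o' < o := hlim.succ_lt h
      have hs0 : (0 : Ordinal) < succ o' := lt_of_le_of_lt zero_le (lt_succ o')
      rw [hIoo o' h0 h]
      constructor
      · have h1 : sInf (fseq φ o') < sInf (fseq φ (succ o')) :=
          hstrictA o' (succ o') h0 (lt_succ o') hso
        have h2 : sInf (fseq φ (succ o')) ≤ p := le_csSup hABd (hmemA _ hs0 hso)
        exact lt_of_lt_of_le h1 h2
      · have h1 : sSup (fseq φ (succ o')) < sSup (fseq φ o') :=
          hstrictB o' (succ o') h0 (lt_succ o') hso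
        exact lt_of_le_of_lt (hple o' h) h1
  have hBBd : BddBelow Bset := by
    refine ⟨p, ?_⟩
    rintro x ⟨o', ⟨h0, h⟩, rfl⟩
    have := claim1 o' h
    rw [hIoo o' h0 h] at this
    exact this.2.le
  have hpleB : p ≤ sInf Bset := by
    apply le_csInf hBNE
    rintro x ⟨o', ⟨h0, h⟩, rfl⟩
    have := claim1 o' h
    rw [hIoo o' h0 h] at this
    exact this.2.le
  have hqp : sInf Bset = p := by
    rcases eq_or_lt_of_le hpleB with h | h
    · exact h.symm
    · exfalso
      apply hie
      have hIooD : Ioo p (sInf Bset) ⊆ ⋂ (o' : Ordinal), ⋂ (_ : o' < o), fseq φ o' := by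
        intro x hx
        rw [Set.mem_iInter₂]
        intro o'' h''
        rcases eq_zero_or_pos o'' with rfl | h0''
        · rw [fseq_zero]; trivial
        · rw [hIoo o'' h0'' h'']
          constructor
          · have h1 : sInf (fseq φ o'') ≤ p := le_csSup hABd (hmemA _ h0'' h'')
            exact lt_of_le_of_lt h1 hx.1
          · have h2 : sInf Bset ≤ sSup (fseq φ o'') := csInf_le hBBd (hmemB _ h0'' h'')
            exact lt_of_lt_of_le hx.2 h2
      have hsub := interior_maximal hIooD isOpen_Ioo
      obtain ⟨x, hx⟩ := Set.nonempty_Ioo.mpr h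
      exact ⟨x, hsub hx⟩
  have hshrink : ∀ ε : ℝ, 0 < ε → ∃ o', 0 < o' ∧ o' < o ∧
      fseq φ o' ⊆ Ioo (p - ε) (p + ε) := by
    intro ε hε
    obtain ⟨x₁, hx₁A, hx₁⟩ := exists_lt_of_lt_csSup hANE (show p - ε < sSup Aset by
      rw [← hp]; linarith)
    obtain ⟨o₁, ⟨h01, h1⟩, rfl⟩ := hx₁A
    obtain ⟨x₂, hx₂B, hx₂⟩ := exists_lt_of_csInf_lt hBNE (show sInf Bset < p + ε by
      rw [hqp]; linarith)
    obtain ⟨o₂, ⟨h02, h2⟩, rfl⟩ := hx₂B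
    refine ⟨max o₁ o₂, lt_of_lt_of_le h01 (le_max_left _ _), max_lt h1 h2, ?_⟩
    intro x hx
    have hxa : x ∈ fseq φ o₁ := hchain o₁ _ (le_max_left _ _) (max_lt h1 h2) hx
    have hxb : x ∈ fseq φ o₂ := hchain o₂ _ (le_max_right _ _) (max_lt h1 h2) hx
    rw [hIoo o₁ h01 h1] at hxa
    rw [hIoo o₂ h02 h2] at hxb
    exact ⟨lt_trans hx₁ hxa.1, lt_trans hxb.2 hx₂⟩
  -- fixed point freeness at p
  have hFP : ∀ o', o' < o → ∃ hg : G, φ hg p ≠ p ∧ φ hg p ∈ fseq φ o' := by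
    intro o' h
    have hso : succ o' < o := hlim.succ_lt h
    have hspec := step_spec φ (step_exists φ SM hNW hGap (hN o' h))
    obtain ⟨y, u, v, hy, hu, hv, huv, hgapuv, hTeq⟩ := hspec
    have hpin' : p ∈ Ioo u v := by
      have := claim1 (succ o') hso
      rw [fseq_succ, hTeq] at this
      exact this
    obtain ⟨hg, hgstab, hgmove⟩ := gap_moves φ SM hu hv huv hgapuv hpin'
    exact ⟨hg, hgmove, stabs_apply_mem φ hgstab (claim1 o' h)⟩
  have hnt : ∃ g : G, φ g p ≠ p := by
    obtain ⟨hg, h1, _⟩ := hFP 0 hlim.pos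
    exact ⟨hg, h1⟩
  by_cases hup : ∀ ε > (0:ℝ), ∃ z ∈ orbit φ p, p < z ∧ z < p + ε
  · exact no_accum φ SM hGap hnt (Or.inl hup)
  · push_neg at hup
    obtain ⟨ε₀, hε₀, hno⟩ := hup
    apply no_accum φ SM hGap hnt (Or.inr ?_)
    intro ε hε
    obtain ⟨o', h0', ho', hsub⟩ := hshrink (min ε ε₀) (lt_min hε hε₀)
    obtain ⟨hg, hgmove, hgmem⟩ := hFP o' ho'
    have hz := hsub hgmem
    refine ⟨φ hg p, ⟨hg, rfl⟩, ?_, ?_⟩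
    · have h1 := hz.1
      have h2 : p - ε ≤ p - min ε ε₀ := by
        have := min_le_left ε ε₀; linarith
      linarith
    · rcases lt_or_gt_of_ne hgmove with hlt | hgt
      · exact hlt
      · exfalso
        have h2 : φ hg p < p + ε₀ := by
          have := hz.2
          have h3 := min_le_right ε ε₀
          linarith
        exact absurd h2 (not_lt.mpr (hno _ ⟨hg, rfl⟩ hgt))

include SM hNW hGap in
theorem main_induction : ∀ o : Ordinal.{0},
    Nice φ (fseq φ o) ∧ ∀ o' < o, SI (fseq φ o) (fseq φ o') := by
  intro o
  induction o using Ordinal.induction with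
  | _ o IH =>
  rcases Ordinal.zero_or_succ_or_isSuccLimit o with rfl | ⟨a, rfl⟩ | hlim
  · refine ⟨by rw [fseq_zero]; exact nice_univ φ, ?_⟩
    intro o' ho'
    exact absurd ho' (not_lt_zero (a := o'))
  · have hPa := IH a (lt_succ a)
    have hNa := hPa.1
    have hspec := step_spec φ (step_exists φ SM hNW hGap hNa)
    obtain ⟨y, u, v, hy, hu, hv, huv, hgapuv, hTeq⟩ := hspec
    have hfs : fseq φ (succ a) = Ioo u v := by rw [fseq_succ]; exact hTeq
    have hsub : Ioo u v ⊆ fseq φ a :=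
      Set.Subset.trans Set.Ioo_subset_Icc_self
        (hNa.2.1.out (orbIn_subset φ hy hu) (orbIn_subset φ hy hv))
    have hSIa : SI (fseq φ (succ a)) (fseq φ a) := by
      rw [hfs]
      exact ⟨hsub, u, v, orbIn_subset φ hy hu, orbIn_subset φ hy hv,
        fun x hx => ⟨hx.1, hx.2⟩⟩
    constructor
    · rw [hfs]
      exact gap_nice φ SM hNa hy hu hv huv hgapuv
    · intro o' ho'
      rw [lt_succ_iff] at ho'
      rcases eq_or_lt_of_le ho' with rfl | ho''
      · exact hSIa
      · exact hSIa.trans (hPa.2 o' ho'')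
  · -- limit case
    have hN : ∀ o' < o, Nice φ (fseq φ o') := fun o' h => (IH o' h).1
    have hSIh : ∀ o₂ < o, ∀ o₁ < o₂, SI (fseq φ o₂) (fseq φ o₁) :=
      fun o₂ h o₁ h' => (IH o₂ h).2 o₁ h'
    set D : Set ℝ := ⋂ (o' : Ordinal), ⋂ (_ : o' < o), fseq φ o' with hD
    have hflim : fseq φ o = interior D := fseq_limit φ hlim
    have hieNE : (interior D).Nonempty := by
      by_contra hie
      exact limit_contradiction φ SM hNW hGap hlim hN hSIh hie
    have hDsub : ∀ o' < o, D ⊆ fseq φ o' := by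
      intro o' h x hx
      rw [hD, Set.mem_iInter₂] at hx
      exact hx o' h
    have hDconn : D.OrdConnected := by
      constructor
      intro x hx y hy z hz
      rw [hD, Set.mem_iInter₂] at hx hy ⊢
      intro o' ho'
      exact ((hN o' ho').2.1).out (hx o' ho') (hy o' ho') hz
    have hNice : Nice φ (fseq φ o) := by
      rw [hflim]
      refine ⟨isOpen_interior, ordConnected_interior hDconn, hieNE, ?_⟩
      intro g
      by_cases hE : act φ g (interior D) ∩ interior D = ∅
      · right; exact hE
      · left
        obtain ⟨w, hw1, hw2⟩ := Set.nonempty_iff_ne_empty.mpr hE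
        have hstabs : ∀ o' < o, Stabs φ (fseq φ o') g := by
          intro o' ho'
          apply stabs_of_meet φ (hN o' ho')
          refine ⟨w, ?_, (interior_subset.trans (hDsub o' ho')) hw2⟩
          obtain ⟨x, hx, rfl⟩ := hw1
          exact mem_act_of_mem φ ((interior_subset.trans (hDsub o' ho')) hx)
        have hactD : act φ g D = D := by
          rw [hD]
          show (φ g) '' _ = _
          rw [Set.image_iInter₂ (φ g).bijective]
          apply Set.iInter₂_congr
          intro o' ho'
          exact hstabs o' ho'
        show act φ g (interior D) = interior D
        rw [act_interior φ SM, hactD]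
    refine ⟨hNice, ?_⟩
    intro o' ho'
    have hso : succ o' < o := hlim.succ_lt ho'
    obtain ⟨hsub', u, v, hu, hv, hb⟩ := (IH (succ o') hso).2 o' (lt_succ o')
    have hsub2 : fseq φ o ⊆ fseq φ (succ o') := by
      rw [hflim]
      exact interior_subset.trans (hDsub (succ o') hso)
    exact ⟨hsub2.trans hsub', u, v, hu, hv, fun x hx => hb x (hsub2 hx)⟩

include SM hNW hGap in
theorem mainFalse : False := by
  have hP := main_induction φ SM hNW hGap
  have hQ : ∀ o : Ordinal.{0}, ∃ q : ℚ, (q:ℝ) ∈ fseq φ o ∧ (q:ℝ) ∉ fseq φ (succ o) := by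
    intro o
    have hNa := (hP o).1
    have hspec := step_spec φ (step_exists φ SM hNW hGap hNa)
    obtain ⟨y, u, v, hy, hu, hv, huv, hgapuv, hTeq⟩ := hspec
    have hfs : fseq φ (succ o) = Ioo u v := by rw [fseq_succ]; exact hTeq
    have huS : u ∈ fseq φ o := orbIn_subset φ hy hu
    obtain ⟨ε, hε, hball⟩ := Metric.isOpen_iff.mp hNa.1 u huS
    rw [Real.ball_eq_Ioo] at hball
    obtain ⟨q, hq1, hq2⟩ := exists_rat_btwn (show u - ε/2 < u by linarith)
    have hqS : (q:ℝ) ∈ fseq φ o := hball ⟨by linarith, by linarith⟩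
    refine ⟨q, hqS, ?_⟩
    rw [hfs]
    rintro ⟨h1, _⟩
    exact absurd hq2 (not_lt.mpr h1.le)
  choose Q hQ1 hQ2 using hQ
  have hQinj : ∀ o₁ o₂ : Ordinal.{0}, o₁ < o₂ → Q o₁ ≠ Q o₂ := by
    intro o₁ o₂ h hEq
    have hsub : fseq φ o₂ ⊆ fseq φ (succ o₁) := by
      rcases eq_or_lt_of_le (succ_le_of_lt h) with heq | hlt
      · rw [← heq]
      · exact ((hP o₂).2 _ hlt).1
    have hm := hsub (hQ1 o₂)
    rw [← hEq] at hm
    exact hQ2 o₁ hm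
  set θ : Ordinal.{0} := (Cardinal.aleph 1).ord with hθ
  let j : θ.ToType → ℚ := fun i => Q ((Ordinal.ToType.mk (o := θ)).symm i).1
  have hjinj : Function.Injective j := by
    intro i₁ i₂ hEq
    by_contra hne
    have hne' : (((Ordinal.ToType.mk (o := θ)).symm i₁ : Set.Iio θ) : Ordinal.{0}) ≠
        (((Ordinal.ToType.mk (o := θ)).symm i₂ : Set.Iio θ) : Ordinal.{0}) := by
      intro hc
      exact hne ((Ordinal.ToType.mk (o := θ)).symm.injective (Subtype.coe_injective hc))
    rcases hne'.lt_or_gt with h | h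
    · exact hQinj _ _ h hEq
    · exact hQinj _ _ h hEq.symm
  have h1 : Cardinal.mk θ.ToType ≤ Cardinal.mk ℚ := Cardinal.mk_le_of_injective hjinj
  have h2 : Cardinal.mk ℚ ≤ Cardinal.aleph0 := Cardinal.mk_le_aleph0
  have h3 : Cardinal.mk θ.ToType = Cardinal.aleph 1 := by
    rw [Cardinal.mk_toType, hθ, Cardinal.card_ord]
  rw [h3] at h1
  exact absurd (h1.trans h2) (not_le.mpr Cardinal.aleph0_lt_aleph_one)

end CPART

end ShiZhou

/-- Dichotomy theorem of Shi–Zhou: a countable group `G` either admits a topologically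
transitive action on `ℝ` by orientation-preserving homeomorphisms, or every action of
`G` on `ℝ` by orientation-preserving homeomorphisms has a wandering interval `(a, b)`:
each group element either restricts to the identity on `(a, b)` or moves `(a, b)`
entirely off itself. -/
theorem shi_zhou_dichotomy (G : Type) [Group G] [Countable G] :
    (∃ φ : G →* Equiv.Perm ℝ, (∀ g : G, StrictMono (φ g)) ∧
      ∃ x : ℝ, Dense {y : ℝ | ∃ g : G, y = φ g x}) ∨
    (∀ φ : G →* Equiv.Perm ℝ, (∀ g : G, StrictMono (φ g)) →
      ∃ a b : ℝ, a < b ∧ ∀ g : G,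
        (∀ x ∈ Set.Ioo a b, φ g x = x) ∨
        (φ g '' Set.Ioo a b) ∩ Set.Ioo a b = ∅) := by
  by_cases hL : (∃ φ : G →* Equiv.Perm ℝ, (∀ g : G, StrictMono (φ g)) ∧
      ∃ x : ℝ, Dense {y : ℝ | ∃ g : G, y = φ g x})
  · exact Or.inl hL
  · right
    intro φ SM
    by_contra hW
    push_neg at hW
    have hNW : ∀ a b : ℝ, a < b → ∃ g : G,
        (∃ x ∈ Set.Ioo a b, φ g x ≠ x) ∧
          ((φ g '' Set.Ioo a b) ∩ Set.Ioo a b).Nonempty := by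
      intro a b hab
      obtain ⟨g, h1, h2⟩ := hW a b hab
      exact ⟨g, h1, h2⟩
    have hGap : ∀ y : ℝ, (∃ g : G, φ g y ≠ y) → ∃ U V : ℝ,
        U ∈ ShiZhou.orbit φ y ∧ V ∈ ShiZhou.orbit φ y ∧ U < V ∧
          Set.Ioo U V ∩ ShiZhou.orbit φ y = ∅ := by
      intro y hnt
      by_contra hng
      push_neg at hng
      apply hL
      apply ShiZhou.left_of_denseOrbit φ SM y hnt
      intro u v hu hv huv
      obtain ⟨w, hw1, hw2⟩ := hng u v hu hv huv
      exact ⟨w, hw2, hw1.1, hw1.2⟩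
    exact ShiZhou.mainFalse φ SM hNW hGap
end
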